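/- Let L be a zpd Lie algebra such that any two commuting elements of L are linearly dependent. Then dim L ≤ 3; moreover L is either a 3-dimensional simple Lie algebra, the 2-dimensional nonabelian Lie algebra, or the 1-dimensional Lie algebra. -/

import Mathlib

set_option maxRecDepth 8000


/-- The linear span of all brackets `⁅x, y⁆` in a Lie algebra `L` over `F`,
i.e. the derived subalgebra `[L, L]` viewed as a subspace. -/
def lieBracketSpan (F L : Type*) [Field F] [LieRing L] [LieAlgebra F L] : Submodule F L :=
  Submodule.span F {z : L | ∃ x y : L, ⁅x, y⁆ = z}

/-- A Lie algebra `L` over a field `F` is zero product determined (zpd) if every bilinear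
map `f : L × L → F` vanishing on commuting pairs factors through the bracket via a linear
map `Φ : [L, L] → F`. -/
def IsZPD (F L : Type*) [Field F] [LieRing L] [LieAlgebra F L] : Prop :=
  ∀ f : L →ₗ[F] L →ₗ[F] F, (∀ x y : L, ⁅x, y⁆ = 0 → f x y = 0) →
    ∃ Φ : lieBracketSpan F L →ₗ[F] F,
      ∀ x y : L, f x y = Φ ⟨⁅x, y⁆, Submodule.subset_span ⟨x, y, rfl⟩⟩


section ZPDAux

variable {F L : Type*} [Field F] [LieRing L] [LieAlgebra F L]

open Submodule Module

lemma zpd_dep {x y : L} (h : ¬ LinearIndependent F ![x, y]) :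
    ∃ a b : F, a • x + b • y = 0 ∧ (a ≠ 0 ∨ b ≠ 0) := by
  rw [LinearIndependent.pair_iff] at h
  push_neg at h
  obtain ⟨a, b, hab, hne⟩ := h
  refine ⟨a, b, hab, ?_⟩
  by_cases ha : a = 0
  · exact Or.inr (hne ha)
  · exact Or.inl ha

lemma li_triple_iff {x y z : L} :
    LinearIndependent F ![x, y, z] ↔
      ∀ a b c : F, a • x + b • y + c • z = 0 → a = 0 ∧ b = 0 ∧ c = 0 := by
  rw [Fintype.linearIndependent_iff]
  constructor
  · intro h a b c habc
    have := h ![a, b, c] (by simpa [Fin.sum_univ_three] using habc)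
    exact ⟨this 0, this 1, this 2⟩
  · intro h g hg i
    have := h (g 0) (g 1) (g 2) (by simpa [Fin.sum_univ_three] using hg)
    fin_cases i
    · exact this.1
    · exact this.2.1
    · exact this.2.2

lemma li_quad_iff {x y z w : L} :
    LinearIndependent F ![x, y, z, w] ↔
      ∀ a b c d : F, a • x + b • y + c • z + d • w = 0 → a = 0 ∧ b = 0 ∧ c = 0 ∧ d = 0 := by
  rw [Fintype.linearIndependent_iff]
  constructor
  · intro h a b c d habc
    have := h ![a, b, c, d] (by simpa [Fin.sum_univ_four] using habc)
    exact ⟨this 0, this 1, this 2, this 3⟩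
  · intro h g hg i
    have := h (g 0) (g 1) (g 2) (g 3) (by simpa [Fin.sum_univ_four] using hg)
    fin_cases i
    · exact this.1
    · exact this.2.1
    · exact this.2.2.1
    · exact this.2.2.2

lemma exists_dual {n : ℕ} {v : Fin n → L} (hv : LinearIndependent F v) (i : Fin n) :
    ∃ φ : L →ₗ[F] F, ∀ j, φ (v j) = if i = j then 1 else 0 := by
  set p := Submodule.span F (Set.range v) with hp
  obtain ⟨q, hq⟩ := p.exists_isCompl
  let b : Basis (Fin n) F p := Basis.span hv
  refine ⟨(b.coord i).comp (p.linearProjOfIsCompl q hq), fun j => ?_⟩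
  have hm : v j ∈ p := Submodule.subset_span ⟨j, rfl⟩
  have h1 : (⟨v j, hm⟩ : p) = b j := by
    apply Subtype.ext
    simp only [b]
    rw [Basis.span_apply]
  have h2 : p.linearProjOfIsCompl q hq (v j) = b j := by
    rw [← h1]
    exact Submodule.linearProjOfIsCompl_apply_left hq ⟨v j, hm⟩
  simp only [LinearMap.comp_apply, h2, Basis.coord_apply, Basis.repr_self,
    Finsupp.single_apply]
  simp [eq_comm]


noncomputable def altForm (φ ψ : L →ₗ[F] F) : L →ₗ[F] L →ₗ[F] F :=
  LinearMap.mk₂ F (fun u v => φ u * ψ v - ψ u * φ v)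
    (fun u u' v => by simp [map_add]; ring)
    (fun c u v => by simp [map_smul, smul_eq_mul]; ring)
    (fun u v v' => by simp [map_add]; ring)
    (fun c u v => by simp [map_smul, smul_eq_mul]; ring)

lemma altForm_apply (φ ψ : L →ₗ[F] F) (u v : L) :
    altForm φ ψ u v = φ u * ψ v - ψ u * φ v := rfl

lemma altForm_comm {x y : L} (hxy : ¬ LinearIndependent F ![x, y]) (φ ψ : L →ₗ[F] F) :
    altForm φ ψ x y = 0 := by
  rw [LinearIndependent.pair_iff] at hxy
  push_neg at hxy
  obtain ⟨a, b, hab, hne⟩ := hxy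
  by_cases ha : a = 0
  · have hb := hne ha
    have h2 : b • y = -(a • x) := by
      rw [eq_neg_iff_add_eq_zero, add_comm]
      exact hab
    have hy : y = (-(b⁻¹ * a)) • x := by
      calc y = b⁻¹ • (b • y) := by rw [smul_smul, inv_mul_cancel₀ hb, one_smul]
        _ = b⁻¹ • (-(a • x)) := by rw [h2]
        _ = (-(b⁻¹ * a)) • x := by rw [smul_neg, smul_smul, neg_smul]
    rw [altForm_apply, hy, map_smul, map_smul, smul_eq_mul, smul_eq_mul]
    ring
  · have h2 : a • x = -(b • y) := eq_neg_of_add_eq_zero_left hab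
    have hx : x = (-(a⁻¹ * b)) • y := by
      calc x = a⁻¹ • (a • x) := by rw [smul_smul, inv_mul_cancel₀ ha, one_smul]
        _ = a⁻¹ • (-(b • y)) := by rw [h2]
        _ = (-(a⁻¹ * b)) • y := by rw [smul_neg, smul_smul, neg_smul]
    rw [altForm_apply, hx, map_smul, map_smul, smul_eq_mul, smul_eq_mul]
    ring



lemma zpd_master (hL : IsZPD F L)
    (hdep : ∀ x y : L, ⁅x, y⁆ = 0 → ¬ LinearIndependent F ![x, y])
    (φ ψ : L →ₗ[F] F) {n : ℕ} (u v : Fin n → L) (h : ∑ i, ⁅u i, v i⁆ = 0) :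
    ∑ i, (φ (u i) * ψ (v i) - ψ (u i) * φ (v i)) = 0 := by
  obtain ⟨Φ, hΦ⟩ := hL (altForm φ ψ) (fun x y hxy => altForm_comm (hdep x y hxy) φ ψ)
  have key : ∑ i, (φ (u i) * ψ (v i) - ψ (u i) * φ (v i))
      = Φ (∑ i, (⟨⁅u i, v i⁆, Submodule.subset_span ⟨u i, v i, rfl⟩⟩ : lieBracketSpan F L)) := by
    rw [map_sum]
    exact Finset.sum_congr rfl fun i _ => hΦ (u i) (v i)
  rw [key]
  have hz : (∑ i, (⟨⁅u i, v i⁆, Submodule.subset_span ⟨u i, v i, rfl⟩⟩ : lieBracketSpan F L)) = 0 := by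
    apply Subtype.ext
    rw [Submodule.coe_sum]
    simpa using h
  rw [hz, map_zero]

lemma combo_mem_span_triple (a b c : F) (x y z : L) :
    a • x + b • y + c • z ∈ Submodule.span F {x, y, z} := by
  apply Submodule.add_mem
  apply Submodule.add_mem
  · exact Submodule.smul_mem _ _ (Submodule.subset_span (by simp))
  · exact Submodule.smul_mem _ _ (Submodule.subset_span (by simp))
  · exact Submodule.smul_mem _ _ (Submodule.subset_span (by simp))

lemma bracket_mem_span (hL : IsZPD F L)
    (hdep : ∀ x y : L, ⁅x, y⁆ = 0 → ¬ LinearIndependent F ![x, y])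
    {x y z : L} (h : LinearIndependent F ![x, y, z]) :
    ⁅x, y⁆ ∈ Submodule.span F {x, y, z} := by
  by_contra hc
  have h4 : LinearIndependent F ![x, y, z, ⁅x, y⁆] := by
    rw [li_quad_iff]
    intro a b c d habcd
    have hd : d = 0 := by
      by_contra hd
      apply hc
      have : ⁅x, y⁆ = (-d⁻¹ * a) • x + (-d⁻¹ * b) • y + (-d⁻¹ * c) • z := by
        have h1 : d • ⁅x, y⁆ = -(a • x + b • y + c • z) := by
          rw [eq_neg_iff_add_eq_zero, add_comm]
          exact habcd
        calc ⁅x, y⁆ = d⁻¹ • (d • ⁅x, y⁆) := by rw [smul_smul, inv_mul_cancel₀ hd, one_smul]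
          _ = d⁻¹ • (-(a • x + b • y + c • z)) := by rw [h1]
          _ = (-d⁻¹ * a) • x + (-d⁻¹ * b) • y + (-d⁻¹ * c) • z := by
              rw [smul_neg, smul_add, smul_add, smul_smul, smul_smul, smul_smul]
              rw [neg_add, neg_add, ← neg_smul, ← neg_smul, ← neg_smul,
                neg_mul, neg_mul, neg_mul]
      rw [this]
      exact combo_mem_span_triple _ _ _ _ _ _
    rw [hd, zero_smul, add_zero] at habcd
    obtain ⟨ha, hb, hc'⟩ := li_triple_iff.mp h a b c habcd
    exact ⟨ha, hb, hc', hd⟩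
  obtain ⟨φ, hφ⟩ := exists_dual h4 2
  obtain ⟨ψ, hψ⟩ := exists_dual h4 3
  have hj : ∑ i : Fin 3, ⁅(![x, y, z]) i, (![⁅y, z⁆, ⁅z, x⁆, ⁅x, y⁆]) i⁆ = 0 := by
    simpa [Fin.sum_univ_three] using lie_jacobi x y z
  have hm := zpd_master hL hdep φ ψ _ _ hj
  have e0 : φ x = 0 := by simpa using hφ 0
  have e1 : φ y = 0 := by simpa using hφ 1
  have e2 : φ z = 1 := by simpa using hφ 2
  have f0 : ψ x = 0 := by simpa using hψ 0
  have f1 : ψ y = 0 := by simpa using hψ 1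
  have f2 : ψ z = 0 := by simpa using hψ 2
  have f3 : ψ ⁅x, y⁆ = 1 := by simpa using hψ 3
  have e3 : φ ⁅x, y⁆ = 0 := by simpa using hφ 3
  rw [Fin.sum_univ_three] at hm
  simp only [Matrix.cons_val_zero, Matrix.cons_val_one, Matrix.head_cons,
    Matrix.cons_val_two, Matrix.tail_cons] at hm
  rw [e0, e1, e2, f0, f1, f2, f3, e3] at hm
  norm_num at hm

lemma li_comp_triple {e : Fin 4 → L} (he : LinearIndependent F e) {p q r : Fin 4}
    (hpq : p ≠ q) (hpr : p ≠ r) (hqr : q ≠ r) :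
    LinearIndependent F ![e p, e q, e r] := by
  have hinj : Function.Injective ![p, q, r] := by
    intro i j hij
    fin_cases i <;> fin_cases j <;> simp_all
  have hli := he.comp ![p, q, r] hinj
  have hcomp : e ∘ ![p, q, r] = ![e p, e q, e r] := by
    funext i; fin_cases i <;> rfl
  rwa [hcomp] at hli

lemma no_four (hL : IsZPD F L)
    (hdep : ∀ x y : L, ⁅x, y⁆ = 0 → ¬ LinearIndependent F ![x, y])
    (e : Fin 4 → L) (he : LinearIndependent F e) : False := by
  set w : Fin 5 → L := ![⁅e 0, e 1⁆, ⁅e 0, e 2⁆, ⁅e 0, e 3⁆, ⁅e 1, e 2⁆, ⁅e 1, e 3⁆] with hw_def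
  have hsub : ∀ p q r : Fin 4, Submodule.span F {e p, e q, e r} ≤ Submodule.span F (Set.range e) := by
    intro p q r
    rw [Submodule.span_le]
    intro t ht
    simp only [Set.mem_insert_iff, Set.mem_singleton_iff] at ht
    rcases ht with rfl | rfl | rfl <;> exact Submodule.subset_span ⟨_, rfl⟩
  have hmem : ∀ i, w i ∈ Submodule.span F (Set.range e) := by
    intro i
    fin_cases i
    · exact hsub 0 1 2 (bracket_mem_span hL hdep
        (li_comp_triple he (by decide) (by decide) (by decide)))
    · exact hsub 0 2 1 (bracket_mem_span hL hdep
        (li_comp_triple he (by decide) (by decide) (by decide)))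
    · exact hsub 0 3 1 (bracket_mem_span hL hdep
        (li_comp_triple he (by decide) (by decide) (by decide)))
    · exact hsub 1 2 0 (bracket_mem_span hL hdep
        (li_comp_triple he (by decide) (by decide) (by decide)))
    · exact hsub 1 3 0 (bracket_mem_span hL hdep
        (li_comp_triple he (by decide) (by decide) (by decide)))
  have hwli : LinearIndependent F w := by
    rw [Fintype.linearIndependent_iff]
    intro g hg
    have hg5 : g 0 • ⁅e 0, e 1⁆ + g 1 • ⁅e 0, e 2⁆ + g 2 • ⁅e 0, e 3⁆
        + g 3 • ⁅e 1, e 2⁆ + g 4 • ⁅e 1, e 3⁆ = 0 := by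
      simpa [hw_def, Fin.sum_univ_five] using hg
    have hsum : ∑ j : Fin 5, ⁅(![g 0 • e 0, g 1 • e 0, g 2 • e 0, g 3 • e 1, g 4 • e 1]) j,
        (![e 1, e 2, e 3, e 2, e 3]) j⁆ = 0 := by
      simpa [Fin.sum_univ_five, smul_lie] using hg5
    intro i
    fin_cases i
    · obtain ⟨φ, hφ⟩ := exists_dual he 0
      obtain ⟨ψ, hψ⟩ := exists_dual he 1
      have hm := zpd_master hL hdep φ ψ _ _ hsum
      simp [Fin.sum_univ_five, map_smul, smul_eq_mul,
        hφ 0, hφ 1, hφ 2, hφ 3, hψ 0, hψ 1, hψ 2, hψ 3] at hm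
      exact hm
    · obtain ⟨φ, hφ⟩ := exists_dual he 0
      obtain ⟨ψ, hψ⟩ := exists_dual he 2
      have hm := zpd_master hL hdep φ ψ _ _ hsum
      simp [Fin.sum_univ_five, map_smul, smul_eq_mul,
        hφ 0, hφ 1, hφ 2, hφ 3, hψ 0, hψ 1, hψ 2, hψ 3] at hm
      exact hm
    · obtain ⟨φ, hφ⟩ := exists_dual he 0
      obtain ⟨ψ, hψ⟩ := exists_dual he 3
      have hm := zpd_master hL hdep φ ψ _ _ hsum
      simp [Fin.sum_univ_five, map_smul, smul_eq_mul,
        hφ 0, hφ 1, hφ 2, hφ 3, hψ 0, hψ 1, hψ 2, hψ 3] at hm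
      exact hm
    · obtain ⟨φ, hφ⟩ := exists_dual he 1
      obtain ⟨ψ, hψ⟩ := exists_dual he 2
      have hm := zpd_master hL hdep φ ψ _ _ hsum
      simp [Fin.sum_univ_five, map_smul, smul_eq_mul,
        hφ 0, hφ 1, hφ 2, hφ 3, hψ 0, hψ 1, hψ 2, hψ 3] at hm
      exact hm
    · obtain ⟨φ, hφ⟩ := exists_dual he 1
      obtain ⟨ψ, hψ⟩ := exists_dual he 3
      have hm := zpd_master hL hdep φ ψ _ _ hsum
      simp [Fin.sum_univ_five, map_smul, smul_eq_mul,
        hφ 0, hφ 1, hφ 2, hφ 3, hψ 0, hψ 1, hψ 2, hψ 3] at hm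
      exact hm
  have hwli' : LinearIndependent F
      (fun i => (⟨w i, hmem i⟩ : Submodule.span F (Set.range e))) := by
    apply LinearIndependent.of_comp (Submodule.span F (Set.range e)).subtype
    exact hwli
  have h5 : (5 : Cardinal) ≤ Module.rank F (Submodule.span F (Set.range e)) := by
    have := hwli'.cardinal_lift_le_rank
    simpa [Cardinal.lift_ofNat, Cardinal.lift_id'] using this
  have h4 : Module.rank F (Submodule.span F (Set.range e)) ≤ 4 := by
    refine (rank_span_le _).trans ?_
    have h := Cardinal.mk_range_le_lift (f := e)
    simpa [Cardinal.lift_ofNat, Cardinal.lift_id', Cardinal.mk_fin] using h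
  have : (5 : Cardinal) ≤ 4 := h5.trans h4
  norm_num at this

lemma rank_le_three (hL : IsZPD F L)
    (hdep : ∀ x y : L, ⁅x, y⁆ = 0 → ¬ LinearIndependent F ![x, y]) :
    Module.rank F L ≤ 3 := by
  refine rank_le fun s hs => ?_
  by_contra hcard
  push_neg at hcard
  have hc4 : 4 ≤ Fintype.card s := by
    rw [Fintype.card_coe]; omega
  have hc4' : Fintype.card (Fin 4) ≤ Fintype.card s := by simpa using hc4
  obtain ⟨emb⟩ := Function.Embedding.nonempty_of_card_le hc4'
  exact no_four hL hdep (fun i => ((emb i : L))) (hs.comp emb emb.injective)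

lemma rank_le_one_of_pairdep (hab : ∀ x y : L, ¬ LinearIndependent F ![x, y]) :
    Module.rank F L ≤ 1 := by
  refine rank_le fun s hs => ?_
  by_contra hcard
  push_neg at hcard
  have hc2 : Fintype.card (Fin 2) ≤ Fintype.card s := by
    rw [Fintype.card_coe, Fintype.card_fin]; have h12 : 1 < s.card := by exact_mod_cast hcard
    omega
  obtain ⟨emb⟩ := Function.Embedding.nonempty_of_card_le hc2
  have hli := hs.comp emb emb.injective
  have : ((fun (i : s) => (i : L)) ∘ emb) = ![((emb 0 : s) : L), ((emb 1 : s) : L)] := by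
    funext i; fin_cases i <;> rfl
  rw [this] at hli
  exact hab _ _ hli

lemma solve2 {a b : F} {x y : L} (h : a • x + b • y = 0) (hb : b ≠ 0) :
    y = (-(b⁻¹ * a)) • x := by
  have h2 : b • y = -(a • x) := by
    rw [eq_neg_iff_add_eq_zero, add_comm]; exact h
  calc y = b⁻¹ • (b • y) := by rw [smul_smul, inv_mul_cancel₀ hb, one_smul]
    _ = b⁻¹ • (-(a • x)) := by rw [h2]
    _ = (-(b⁻¹ * a)) • x := by rw [smul_neg, smul_smul, neg_smul]

lemma solve3 {a b c : F} {x y z : L} (h : a • x + b • y + c • z = 0) (hc : c ≠ 0) :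
    z = (-(c⁻¹ * a)) • x + (-(c⁻¹ * b)) • y := by
  have h2 : c • z = -(a • x + b • y) := by
    rw [eq_neg_iff_add_eq_zero, add_comm]; exact h
  calc z = c⁻¹ • (c • z) := by rw [smul_smul, inv_mul_cancel₀ hc, one_smul]
    _ = c⁻¹ • (-(a • x + b • y)) := by rw [h2]
    _ = (-(c⁻¹ * a)) • x + (-(c⁻¹ * b)) • y := by
        rw [smul_neg, smul_add, smul_smul, smul_smul, neg_add, ← neg_smul, ← neg_smul]

lemma no_small_ideal
    (hdep : ∀ x y : L, ⁅x, y⁆ = 0 → ¬ LinearIndependent F ![x, y])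
    (hrank : Module.rank F L = 3) {x : L} (hx : x ≠ 0)
    (hbr : ∀ w : L, ⁅w, x⁆ ∈ Submodule.span F {x}) : False := by
  -- find y ∉ span {x}
  have h1 : Submodule.span F ({x} : Set L) ≠ ⊤ := by
    intro htop
    have hr := rank_span_le (R := F) ({x} : Set L)
    rw [htop, rank_top, hrank, Cardinal.mk_singleton] at hr
    norm_num at hr
  obtain ⟨y, hy⟩ : ∃ y, y ∉ Submodule.span F ({x} : Set L) := by
    by_contra h; push_neg at h; exact h1 (Submodule.eq_top_iff'.mpr h)
  have h2 : Submodule.span F ({x, y} : Set L) ≠ ⊤ := by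
    intro htop
    have hr := rank_span_le (R := F) ({x, y} : Set L)
    rw [htop, rank_top, hrank] at hr
    have : Cardinal.mk ({x, y} : Set L) ≤ 2 := by
      refine (Cardinal.mk_insert_le).trans ?_
      rw [Cardinal.mk_singleton]
      norm_num
    have h3 := hr.trans this
    norm_num at h3
  obtain ⟨z, hz⟩ : ∃ z, z ∉ Submodule.span F ({x, y} : Set L) := by
    by_contra h; push_neg at h; exact h2 (Submodule.eq_top_iff'.mpr h)
  have hxyz : LinearIndependent F ![x, y, z] := by
    rw [li_triple_iff]
    intro a b c habc
    have hc : c = 0 := by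
      by_contra hc
      apply hz
      rw [solve3 habc hc]
      exact Submodule.add_mem _
        (Submodule.smul_mem _ _ (Submodule.subset_span (by simp)))
        (Submodule.smul_mem _ _ (Submodule.subset_span (by simp)))
    rw [hc, zero_smul, add_zero] at habc
    have hb : b = 0 := by
      by_contra hb
      apply hy
      rw [solve2 habc hb]
      exact Submodule.smul_mem _ _ (Submodule.subset_span (by simp))
    rw [hb, zero_smul, add_zero] at habc
    have ha : a = 0 := by
      rcases smul_eq_zero.mp habc with ha | hx0
      · exact ha
      · exact absurd hx0 hx
    exact ⟨ha, hb, hc⟩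
  obtain ⟨lam, hlam⟩ := Submodule.mem_span_singleton.mp (hbr y)
  obtain ⟨mu, hmu⟩ := Submodule.mem_span_singleton.mp (hbr z)
  have hbr0 : ⁅mu • y - lam • z, x⁆ = 0 := by
    rw [sub_lie, smul_lie, smul_lie, ← hlam, ← hmu, smul_smul, smul_smul, mul_comm, sub_self]
  obtain ⟨a, b, hab, hne⟩ := zpd_dep (hdep _ _ hbr0)
  have ha : a ≠ 0 := by
    rintro rfl
    rw [zero_smul, zero_add] at hab
    rcases smul_eq_zero.mp hab with hb0 | hx0
    · rcases hne with h | h <;> [exact h rfl; exact h hb0]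
    · exact hx hx0
  have hab' : b • x + a • (mu • y - lam • z) = 0 := by
    rw [add_comm]; exact hab
  have hw : mu • y - lam • z = (-(a⁻¹ * b)) • x := solve2 hab' ha
  have h0 : (a⁻¹ * b) • x + mu • y + (-lam) • z = 0 := by
    rw [add_assoc, neg_smul, ← sub_eq_add_neg, hw, neg_smul, add_neg_cancel]
  obtain ⟨hq1, hq2, hq3⟩ := li_triple_iff.mp hxyz _ _ _ h0
  have hyx0 : ⁅y, x⁆ = 0 := by
    rw [← hlam]
    have : lam = 0 := by
      have := hq3
      simpa using neg_eq_zero.mp this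
    rw [this, zero_smul]
  have hyxli : LinearIndependent F ![y, x] := by
    rw [LinearIndependent.pair_iff]
    intro s t hst
    have h' := li_triple_iff.mp hxyz t s 0
      (by rw [zero_smul, add_zero, add_comm]; exact hst)
    exact ⟨h'.2.1, h'.1⟩
  exact hdep y x hyx0 hyxli

lemma simple_of_rank_three (hL : IsZPD F L)
    (hdep : ∀ x y : L, ⁅x, y⁆ = 0 → ¬ LinearIndependent F ![x, y])
    (hrank : Module.rank F L = 3) : LieAlgebra.IsSimple F L := by
  haveI hfin : Module.Finite F L := by
    rw [← Module.rank_lt_aleph0_iff, hrank]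
    exact Cardinal.nat_lt_aleph0 3
  have hfr : Module.finrank F L = 3 := by
    have := Module.finrank_eq_rank F L
    rw [hrank] at this
    exact_mod_cast this
  constructor
  · -- ideals
    intro I
    by_cases hbot : I = ⊥
    · exact Or.inl hbot
    refine Or.inr ?_
    by_contra htop
    rw [LieSubmodule.eq_bot_iff] at hbot
    push_neg at hbot
    obtain ⟨x, hxI, hx⟩ := hbot
    by_cases hcase : ∀ y ∈ I, y ∈ Submodule.span F ({x} : Set L)
    · exact no_small_ideal hdep hrank hx fun w => hcase _ (lie_mem_right F L I w x hxI)
    · push_neg at hcase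
      obtain ⟨y, hyI, hy⟩ := hcase
      have hxy : LinearIndependent F ![x, y] := by
        rw [LinearIndependent.pair_iff]
        intro a b hab
        have hb : b = 0 := by
          by_contra hb
          apply hy
          rw [solve2 hab hb]
          exact Submodule.smul_mem _ _ (Submodule.subset_span (by simp))
        rw [hb, zero_smul, add_zero] at hab
        rcases smul_eq_zero.mp hab with ha | hx0
        · exact ⟨ha, hb⟩
        · exact absurd hx0 hx
      -- I ⊆ span {x, y}
      have hIsub : ∀ v, v ∈ I → v ∈ Submodule.span F ({x, y} : Set L) := by
        intro v hvI
        by_contra hvn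
        have hxyv : LinearIndependent F ![x, y, v] := by
          rw [li_triple_iff]
          intro a b c habc
          have hc : c = 0 := by
            by_contra hc
            apply hvn
            rw [solve3 habc hc]
            exact Submodule.add_mem _
              (Submodule.smul_mem _ _ (Submodule.subset_span (by simp)))
              (Submodule.smul_mem _ _ (Submodule.subset_span (by simp)))
          rw [hc, zero_smul, add_zero] at habc
          obtain ⟨ha, hb⟩ := LinearIndependent.pair_iff.mp hxy a b habc
          exact ⟨ha, hb, hc⟩
        have hspan := hxyv.span_eq_top_of_card_eq_finrank (by simpa using hfr.symm)
        apply htop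
        rw [← LieSubmodule.toSubmodule_eq_top]
        rw [eq_top_iff, ← hspan]
        rw [Submodule.span_le]
        intro t ht
        simp only [Set.mem_range] at ht
        obtain ⟨i, rfl⟩ := ht
        fin_cases i
        · exact hxI
        · exact hyI
        · exact hvI
      -- u = ⁅x, y⁆
      set u := ⁅x, y⁆ with hu_def
      have hu : u ≠ 0 := fun h0 => hdep x y h0 hxy
      have hbrIuspan : ∀ p, p ∈ I → ∀ q, q ∈ I → ⁅p, q⁆ ∈ Submodule.span F ({u} : Set L) := by
        intro p hp q hq
        obtain ⟨a1, b1, hp'⟩ := Submodule.mem_span_pair.mp (hIsub p hp)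
        obtain ⟨a2, b2, hq'⟩ := Submodule.mem_span_pair.mp (hIsub q hq)
        rw [← hp', ← hq']
        rw [add_lie, lie_add, lie_add, smul_lie, smul_lie, smul_lie, smul_lie,
          lie_smul, lie_smul, lie_smul, lie_smul, lie_self, smul_zero, smul_zero,
          lie_self, smul_zero, smul_zero, add_zero, zero_add, ← lie_skew y x, ← hu_def]
        rw [Submodule.mem_span_singleton]
        refine ⟨a1 * b2 - b1 * a2, ?_⟩
        rw [sub_smul, mul_smul, mul_smul]
        simp [smul_neg, sub_eq_add_neg]
      have hbrU : ∀ w : L, ⁅w, u⁆ ∈ Submodule.span F ({u} : Set L) := by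
        intro w
        rw [hu_def, leibniz_lie]
        exact Submodule.add_mem _
          (hbrIuspan _ (lie_mem_right F L I w x hxI) _ hyI)
          (hbrIuspan _ hxI _ (lie_mem_right F L I w y hyI))
      exact no_small_ideal hdep hrank hu hbrU
  · -- non-abelian
    intro hab
    have h1 : Module.rank F L ≤ 1 :=
      rank_le_one_of_pairdep fun x y => hdep x y (trivial_lie_zero L L x y)
    rw [hrank] at h1
    norm_num at h1

end ZPDAux

/-- if `L` is a (nonzero) zpd Lie algebra in which any two commuting elements
are linearly dependent, then `dim L ≤ 3`, and moreover `L` is a `3`-dimensional simple Lie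
algebra, or the `2`-dimensional nonabelian Lie algebra, or the `1`-dimensional Lie
algebra. -/
theorem isZPD_dep_classification (F L : Type*) [Field F] [LieRing L] [LieAlgebra F L]
    [Nontrivial L] (hL : IsZPD F L)
    (hdep : ∀ x y : L, ⁅x, y⁆ = 0 → ¬ LinearIndependent F ![x, y]) :
    Module.rank F L ≤ 3 ∧
      ((Module.rank F L = 3 ∧ LieAlgebra.IsSimple F L) ∨
        (Module.rank F L = 2 ∧ ∃ x y : L, ⁅x, y⁆ ≠ 0) ∨
        Module.rank F L = 1) := by
  have h3 : Module.rank F L ≤ 3 := rank_le_three hL hdep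
  haveI hfin : Module.Finite F L := by
    rw [← Module.rank_lt_aleph0_iff]
    exact lt_of_le_of_lt h3 (by simpa using Cardinal.nat_lt_aleph0 3)
  have hfr : (Module.finrank F L : Cardinal) = Module.rank F L := Module.finrank_eq_rank F L
  have hn3 : Module.finrank F L ≤ 3 := Module.finrank_le_of_rank_le (by exact_mod_cast h3)
  have hn1 : 1 ≤ Module.finrank F L := Module.finrank_pos
  refine ⟨h3, ?_⟩
  have hcases : Module.finrank F L = 1 ∨ Module.finrank F L = 2 ∨ Module.finrank F L = 3 := by
    omega
  rcases hcases with h | h | h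
  · right; right
    rw [← hfr, h]; norm_num
  · right; left
    constructor
    · rw [← hfr, h]; norm_num
    · by_contra hno
      push_neg at hno
      have h1 := rank_le_one_of_pairdep (fun x y => hdep x y (hno x y))
      rw [← hfr, h] at h1
      norm_num at h1
  · left
    have hr3 : Module.rank F L = 3 := by rw [← hfr, h]; norm_num
    exact ⟨hr3, simple_of_rank_three hL hdep hr3⟩
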